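/- arXiv:1211.2497 — 3 statements merged into one kernel-verified Lean document; each statement's English description precedes it below -/
import Mathlib

section
/- For all natural numbers n and k with k ≤ n and 0 < k < n, log₂(C(n,k)) ≤ n·H₂(k/n), where C(n,k) is the binomial coefficient and H₂(p) = -p·log₂(p) - (1-p)·log₂(1-p) is the binary entropy function. -/
open Real

/-- log₂ C(n,k) ≤ n·H₂(k/n) for 0 < k < n. -/
theorem stmt_0 (n k : ℕ) (hk : 0 < k) (hkn : k < n) :
    Real.logb 2 (n.choose k) ≤
      (n : ℝ) * (-(k / n : ℝ) * Real.logb 2 (k / n)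
        - (1 - (k / n : ℝ)) * Real.logb 2 (1 - (k / n : ℝ))) := by
  have hn : (0:ℝ) < n := by exact_mod_cast hk.trans hkn
  set p : ℝ := (k : ℝ) / n with hp
  have hp0 : 0 < p := by positivity
  have hp1 : p < 1 := by
    rw [hp, div_lt_one hn]; exact_mod_cast hkn
  have h1p : 0 < 1 - p := by linarith
  -- key inequality: C(n,k) * p^k * (1-p)^(n-k) ≤ 1
  have key : (n.choose k : ℝ) * (p ^ k * (1 - p) ^ (n - k)) ≤ 1 := by
    have hb := add_pow p (1 - p) n
    have hsum : ∑ i ∈ Finset.range (n + 1), p ^ i * (1 - p) ^ (n - i) * (n.choose i : ℝ) = 1 := by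
      rw [← hb]; simp
    calc (n.choose k : ℝ) * (p ^ k * (1 - p) ^ (n - k))
        = p ^ k * (1 - p) ^ (n - k) * (n.choose k : ℝ) := by ring
      _ ≤ ∑ i ∈ Finset.range (n + 1), p ^ i * (1 - p) ^ (n - i) * (n.choose i : ℝ) := by
          apply Finset.single_le_sum (f := fun i => p ^ i * (1 - p) ^ (n - i) * (n.choose i : ℝ))
          · intro i _; positivity
          · simp [Finset.mem_range]; omega
      _ = 1 := hsum
  have hchoosepos : (0:ℝ) < (n.choose k : ℝ) := by
    exact_mod_cast Nat.choose_pos hkn.le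
  have hle : (n.choose k : ℝ) ≤ (p ^ k)⁻¹ * ((1 - p) ^ (n - k))⁻¹ := by
    rw [← mul_inv]
    rw [le_inv_comm₀ hchoosepos (by positivity)] at *
    calc (p ^ k * (1 - p) ^ (n - k)) ≤ 1 / (n.choose k : ℝ) := by
          rw [le_div_iff₀ hchoosepos]; linarith [key]
      _ = ((n.choose k : ℝ))⁻¹ := one_div _
  have hlog : Real.logb 2 (n.choose k) ≤
      -(k : ℝ) * Real.logb 2 p - ((n : ℝ) - k) * Real.logb 2 (1 - p) := by
    calc Real.logb 2 (n.choose k)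
        ≤ Real.logb 2 ((p ^ k)⁻¹ * ((1 - p) ^ (n - k))⁻¹) := by
          exact Real.logb_le_logb_of_le (by norm_num) hchoosepos hle
      _ = -(k : ℝ) * Real.logb 2 p - ((n : ℝ) - k) * Real.logb 2 (1 - p) := by
          rw [Real.logb_mul (by positivity) (by positivity), Real.logb_inv, Real.logb_inv,
            Real.logb_pow, Real.logb_pow]
          have : ((n - k : ℕ) : ℝ) = (n : ℝ) - k := by
            push_cast [Nat.cast_sub hkn.le]; ring
          rw [this]; ring
  have hnp : (n : ℝ) * p = k := by rw [hp]; field_simp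
  have hnp' : (n : ℝ) * (1 - p) = (n : ℝ) - k := by
    rw [mul_sub, hnp]; ring
  calc Real.logb 2 (n.choose k)
      ≤ -(k : ℝ) * Real.logb 2 p - ((n : ℝ) - k) * Real.logb 2 (1 - p) := hlog
    _ = (n : ℝ) * (-p * Real.logb 2 p - (1 - p) * Real.logb 2 (1 - p)) := by
        rw [mul_sub, ← mul_assoc, ← mul_assoc, mul_neg, hnp, hnp']
end

section
/- For every real a > 0 and b > 0, the function x ↦ (a(b-x)+x)·log(a(b-x)+x) - a(b-x)·log(a(b-x)) - x·log(x) is concave on the open interval (0, b). -/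
open Real

/-- x ↦ (a(b-x)+x)log(a(b-x)+x) - a(b-x)log(a(b-x)) - x log x is concave on (0,b). -/
theorem stmt_3 (a b : ℝ) (ha : 0 < a) (hb : 0 < b) :
    ConcaveOn ℝ (Set.Ioo (0 : ℝ) b)
      (fun x => (a * (b - x) + x) * Real.log (a * (b - x) + x)
        - a * (b - x) * Real.log (a * (b - x)) - x * Real.log x) := by
  set F : ℝ → ℝ := fun x => (a * (b - x) + x) * Real.log (a * (b - x) + x)
        - a * (b - x) * Real.log (a * (b - x)) - x * Real.log x with hF
  set F' : ℝ → ℝ := fun x => (Real.log (a * (b - x) + x) + 1) * (1 - a)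
        - (Real.log (a * (b - x)) + 1) * (-a) - (Real.log x + 1) with hF'
  set F'' : ℝ → ℝ := fun x =>
      (1 - a) ^ 2 / (a * (b - x) + x) - a ^ 2 / (a * (b - x)) - 1 / x with hF''
  have hu : ∀ x : ℝ, HasDerivAt (fun x : ℝ => a * (b - x) + x) (1 - a) x := by
    intro x
    have := (((hasDerivAt_id x).const_sub b).const_mul a).add (hasDerivAt_id x)
    exact this.congr_deriv (by ring)
  have hv : ∀ x : ℝ, HasDerivAt (fun x : ℝ => a * (b - x)) (-a) x := by
    intro x
    have := ((hasDerivAt_id x).const_sub b).const_mul a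
    exact this.congr_deriv (by ring)
  have key1 : ∀ x ∈ Set.Ioo (0 : ℝ) b, HasDerivAt F (F' x) x := by
    intro x hx
    have h1 : 0 < x := hx.1
    have h2 : 0 < a * (b - x) := mul_pos ha (by linarith [hx.2])
    have h3 : 0 < a * (b - x) + x := by linarith
    have t1 := (hu x).mul ((hu x).log h3.ne')
    have t2 := (hv x).mul ((hv x).log h2.ne')
    have t3 := Real.hasDerivAt_mul_log h1.ne'
    have := (t1.sub t2).sub t3
    refine this.congr_deriv ?_
    simp only [hF']
    have hbx : b - x ≠ 0 := (sub_pos.mpr hx.2).ne'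
    field_simp
    ring
  have key2 : ∀ x ∈ Set.Ioo (0 : ℝ) b, HasDerivAt F' (F'' x) x := by
    intro x hx
    have h1 : 0 < x := hx.1
    have h2 : 0 < a * (b - x) := mul_pos ha (by linarith [hx.2])
    have h3 : 0 < a * (b - x) + x := by linarith
    have t1 := (((hu x).log h3.ne').add_const 1).mul_const (1 - a)
    have t2 := (((hv x).log h2.ne').add_const 1).mul_const (-a)
    have t3 := (Real.hasDerivAt_log h1.ne').add_const 1
    have := (t1.sub t2).sub t3
    refine this.congr_deriv ?_
    simp only [hF'']
    ring
  have heq : ∀ x ∈ Set.Ioo (0 : ℝ) b, deriv F =ᶠ[nhds x] F' := by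
    intro x hx
    filter_upwards [isOpen_Ioo.mem_nhds hx] with y hy using (key1 y hy).deriv
  have hd1 : DifferentiableOn ℝ F (Set.Ioo 0 b) := fun x hx =>
    (key1 x hx).differentiableAt.differentiableWithinAt
  have hd2 : DifferentiableOn ℝ (deriv F) (Set.Ioo 0 b) := fun x hx =>
    ((key2 x hx).differentiableAt.congr_of_eventuallyEq (heq x hx)).differentiableWithinAt
  refine concaveOn_of_deriv2_nonpos (convex_Ioo 0 b) hd1.continuousOn
    (by rwa [interior_Ioo]) (by rwa [interior_Ioo]) ?_
  rw [interior_Ioo]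
  intro x hx
  have h1 : 0 < x := hx.1
  have h2 : 0 < a * (b - x) := mul_pos ha (by linarith [hx.2])
  have h3 : 0 < a * (b - x) + x := by linarith
  have hderiv2 : deriv (deriv F) x = F'' x := by
    rw [(heq x hx).deriv_eq]
    exact (key2 x hx).deriv
  have h2iter : deriv^[2] F x = deriv (deriv F) x := by
    simp [Function.iterate_succ, Function.iterate_zero, Function.comp]
  rw [h2iter, hderiv2]
  have h4 : (1 - a) ^ 2 / (a * (b - x) + x) ≤ a ^ 2 / (a * (b - x)) + 1 / x := by
    rw [div_add_div _ _ h2.ne' h1.ne', div_le_div_iff₀ h3 (mul_pos h2 h1)]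
    nlinarith [sq_nonneg (a * x + a * (b - x))]
  simp only [hF'']
  linarith
end

section
/- Let 0 ≤ λ ≤ 1, 0 ≤ d₁ ≤ 1, 0 ≤ d₂ ≤ 1, and let N be a positive integer. Define the joint distribution P(M₁ = m₁, M₂ = m₂) = ∑_{n₁=m₁}^{N-m₂} C(n₁,m₁)·d₁^{n₁-m₁}·(1-d₁)^{m₁}·C(N-n₁,m₂)·d₂^{N-n₁-m₂}·(1-d₂)^{m₂}·C(N,n₁)·λ^{n₁}·(1-λ)^{N-n₁} for m₁ + m₂ ≤ N. Then P(M₁ = m₁, M₂ = m₂) = C(N-m₂, m₁)·C(N, m₂)·(λ(1-d₁))^{m₁}·((1-λ)(1-d₂))^{m₂}·d^{N-m₁-m₂}, where d = λd₁ + (1-λ)d₂. -/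
open Finset

lemma choose_aux (N m₁ m₂ k : ℕ) (hm : m₁ + m₂ ≤ N) (hk : k ≤ N - m₁ - m₂) :
    (m₁ + k).choose m₁ * (N - (m₁ + k)).choose m₂ * N.choose (m₁ + k)
      = (N - m₂).choose m₁ * N.choose m₂ * (N - m₁ - m₂).choose k := by
  have h1 : m₁ + k ≤ N := by omega
  have e1 : N.choose (m₁ + k) * (m₁ + k).choose m₁
      = N.choose m₁ * (N - m₁).choose k := by
    have := Nat.choose_mul (n := N) (Nat.le_add_right m₁ k)
    simpa using this
  have h2 : m₂ ≤ N - m₁ - k := by omega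
  have h3 : N - m₁ - k ≤ N - m₁ := by omega
  have e2 : (N - m₁).choose k * (N - m₁ - k).choose m₂
      = (N - m₁).choose m₂ * (N - m₁ - m₂).choose k := by
    have hsymm : (N - m₁).choose k = (N - m₁).choose (N - m₁ - k) := by
      rw [Nat.choose_symm (by omega)]
    rw [hsymm, Nat.choose_mul (n := N - m₁) h2, show N - m₁ - k - m₂ = N - m₁ - m₂ - k by omega,
      Nat.choose_symm (show k ≤ N - m₁ - m₂ by omega)]
  have e3 : N.choose m₁ * (N - m₁).choose m₂ = N.choose m₂ * (N - m₂).choose m₁ := by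
    have a1 := Nat.choose_mul (n := N) (Nat.le_add_right m₁ m₂)
    have a2 := Nat.choose_mul (n := N) (Nat.le_add_left m₂ m₁)
    rw [Nat.add_sub_cancel_left] at a1
    rw [Nat.add_sub_cancel] at a2
    rw [← a1, ← a2, Nat.choose_symm_add]
  have key : N - (m₁ + k) = N - m₁ - k := by omega
  rw [key]
  calc (m₁ + k).choose m₁ * (N - m₁ - k).choose m₂ * N.choose (m₁ + k)
      = N.choose (m₁ + k) * (m₁ + k).choose m₁ * (N - m₁ - k).choose m₂ := by ring
    _ = N.choose m₁ * ((N - m₁).choose k * (N - m₁ - k).choose m₂) := by rw [e1]; ring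
    _ = N.choose m₁ * ((N - m₁).choose m₂ * (N - m₁ - m₂).choose k) := by rw [e2]
    _ = N.choose m₁ * (N - m₁).choose m₂ * (N - m₁ - m₂).choose k := by ring
    _ = (N - m₂).choose m₁ * N.choose m₂ * (N - m₁ - m₂).choose k := by rw [e3]; ring

/-- Closed form of the joint distribution P(M₁ = m₁, M₂ = m₂) for two parallel
deletion channels. -/
theorem stmt_5 (lam d₁ d₂ : ℝ) (hl0 : 0 ≤ lam) (hl1 : lam ≤ 1)
    (hd₁0 : 0 ≤ d₁) (hd₁1 : d₁ ≤ 1) (hd₂0 : 0 ≤ d₂) (hd₂1 : d₂ ≤ 1)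
    (N : ℕ) (hN : 0 < N) (m₁ m₂ : ℕ) (hm : m₁ + m₂ ≤ N) :
    ∑ n₁ ∈ Finset.Icc m₁ (N - m₂),
        (n₁.choose m₁ : ℝ) * d₁ ^ (n₁ - m₁) * (1 - d₁) ^ m₁ *
          ((N - n₁).choose m₂ : ℝ) * d₂ ^ (N - n₁ - m₂) * (1 - d₂) ^ m₂ *
          (N.choose n₁ : ℝ) * lam ^ n₁ * (1 - lam) ^ (N - n₁)
      = ((N - m₂).choose m₁ : ℝ) * (N.choose m₂ : ℝ) *
          (lam * (1 - d₁)) ^ m₁ * ((1 - lam) * (1 - d₂)) ^ m₂ *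
          (lam * d₁ + (1 - lam) * d₂) ^ (N - m₁ - m₂) := by
  set K := N - m₁ - m₂ with hK
  have hIcc : Finset.Icc m₁ (N - m₂) = Finset.Ico m₁ (N - m₂ + 1) := by
    rw [Finset.Ico_add_one_right_eq_Icc]
  rw [hIcc, Finset.sum_Ico_eq_sum_range]
  have hcard : N - m₂ + 1 - m₁ = K + 1 := by omega
  rw [hcard]
  have hterm : ∀ k ∈ Finset.range (K + 1),
      ((m₁ + k).choose m₁ : ℝ) * d₁ ^ (m₁ + k - m₁) * (1 - d₁) ^ m₁ *
          ((N - (m₁ + k)).choose m₂ : ℝ) * d₂ ^ (N - (m₁ + k) - m₂) * (1 - d₂) ^ m₂ *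
          (N.choose (m₁ + k) : ℝ) * lam ^ (m₁ + k) * (1 - lam) ^ (N - (m₁ + k))
        = ((N - m₂).choose m₁ : ℝ) * (N.choose m₂ : ℝ) *
            (lam * (1 - d₁)) ^ m₁ * ((1 - lam) * (1 - d₂)) ^ m₂ *
            ((lam * d₁) ^ k * ((1 - lam) * d₂) ^ (K - k) * (K.choose k : ℝ)) := by
    intro k hk
    rw [Finset.mem_range] at hk
    have hk' : k ≤ K := by omega
    have hch := choose_aux N m₁ m₂ k hm hk'
    have hchR : ((m₁ + k).choose m₁ : ℝ) * ((N - (m₁ + k)).choose m₂ : ℝ) *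
        (N.choose (m₁ + k) : ℝ)
        = ((N - m₂).choose m₁ : ℝ) * (N.choose m₂ : ℝ) * (K.choose k : ℝ) := by
      exact_mod_cast congrArg (Nat.cast : ℕ → ℝ) hch
    have e1 : m₁ + k - m₁ = k := by omega
    have e2 : N - (m₁ + k) - m₂ = K - k := by omega
    have e3 : N - (m₁ + k) = m₂ + (K - k) := by omega
    rw [e3] at hchR
    rw [e1, e2, e3, mul_pow, mul_pow, mul_pow, mul_pow]
    linear_combination (d₁ ^ k * (1 - d₁) ^ m₁ * d₂ ^ (K - k) * (1 - d₂) ^ m₂ *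
      lam ^ m₁ * lam ^ k * (1 - lam) ^ m₂ * (1 - lam) ^ (K - k)) * hchR
  rw [Finset.sum_congr rfl hterm, ← Finset.mul_sum]
  rw [← add_pow]
end
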